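/- For any Boolean function f of arity n, the inner negation f^n satisfies f^n = Σ_{S ∈ M(f)} Σ_{T ⊆ S} x_T over GF(2). Consequently, M(f) and M(f^n) have the same maximal elements with respect to inclusion. -/

import Mathlib

/-- A Boolean function of arity `n`. -/
abbrev Bf (n : ℕ) := (Fin n → ZMod 2) → ZMod 2

/-- The Zhegalkin coefficient of the monomial `x_S` of `f`, via Möbius inversion. -/
def zCoeff {n : ℕ} (f : Bf n) (S : Finset (Fin n)) : ZMod 2 :=
  ∑ T ∈ S.powerset, f fun i => if i ∈ T then 1 else 0

/-- The set of monomials of the Zhegalkin polynomial of `f`. -/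
def monomials {n : ℕ} (f : Bf n) : Finset (Finset (Fin n)) :=
  Finset.univ.filter fun S => zCoeff f S = 1

/-- The inner negation `f^n(a) = f(ā)`. -/
def innerNeg {n : ℕ} (f : Bf n) : Bf n := fun a => f fun i => a i + 1

/- ### Auxiliary development -/

/-- Characteristic function of a finset. -/
def chi {n : ℕ} (A : Finset (Fin n)) : Fin n → ZMod 2 := fun i => if i ∈ A then 1 else 0

lemma card_between {n : ℕ} (A T : Finset (Fin n)) (h : T ⊆ A) :
    (A.powerset.filter (fun S => T ⊆ S)).card = 2 ^ (A \ T).card := by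
  rw [← Finset.card_powerset]
  apply Finset.card_bij' (fun S _ => S \ T) (fun W _ => W ∪ T)
  · intro S hS
    simp only [Finset.mem_filter, Finset.mem_powerset] at hS
    simp [Finset.mem_powerset]
    exact hS.1.trans Finset.subset_union_right
  · intro W hW
    simp only [Finset.mem_powerset] at hW
    simp only [Finset.mem_filter, Finset.mem_powerset]
    constructor
    · exact Finset.union_subset (hW.trans (Finset.sdiff_subset)) h
    · exact Finset.subset_union_right
  · intro S hS
    simp only [Finset.mem_filter, Finset.mem_powerset] at hS
    rw [Finset.sdiff_union_self_eq_union, Finset.union_eq_left.mpr hS.2]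
  · intro W hW
    simp only [Finset.mem_powerset] at hW
    rw [Finset.union_sdiff_right]
    exact Finset.sdiff_eq_self_of_disjoint (Finset.disjoint_of_subset_left hW (Finset.sdiff_disjoint)) |>.symm ▸ rfl

lemma card_between_zmod {n : ℕ} (A T : Finset (Fin n)) (h : T ⊆ A) :
    ((A.powerset.filter (fun S => T ⊆ S)).card : ZMod 2) = if T = A then 1 else 0 := by
  rw [card_between A T h]
  split_ifs with he
  · subst he; simp
  · have : (A \ T).card ≠ 0 := by
      simp only [ne_eq, Finset.card_eq_zero, Finset.sdiff_eq_empty_iff_subset]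
      intro hAT
      exact he (Finset.Subset.antisymm h hAT)
    obtain ⟨k, hk⟩ := Nat.exists_eq_succ_of_ne_zero this
    rw [hk]
    push_cast
    have h2 : (2:ZMod 2) = 0 := by decide
    rw [pow_succ, h2, mul_zero]

lemma swap_sum {n : ℕ} (A : Finset (Fin n)) (g : Finset (Fin n) → ZMod 2) :
    ∑ S ∈ A.powerset, ∑ T ∈ S.powerset, g T
      = ∑ T ∈ A.powerset, ((A.powerset.filter (fun S => T ⊆ S)).card : ZMod 2) * g T := by
  have h1 : ∀ S ∈ A.powerset, ∑ T ∈ S.powerset, g T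
      = ∑ T ∈ A.powerset, if T ⊆ S then g T else 0 := by
    intro S hS
    rw [Finset.mem_powerset] at hS
    rw [Finset.sum_ite, Finset.sum_const_zero, add_zero]
    apply Finset.sum_congr _ (fun _ _ => rfl)
    ext T
    simp only [Finset.mem_filter, Finset.mem_powerset]
    exact ⟨fun h => ⟨h.trans hS, h⟩, fun h => h.2⟩
  rw [Finset.sum_congr rfl h1, Finset.sum_comm]
  apply Finset.sum_congr rfl
  intro T _
  rw [Finset.sum_ite, Finset.sum_const_zero, add_zero, Finset.sum_const, nsmul_eq_mul]

lemma inv_sum {n : ℕ} (f : Bf n) (A : Finset (Fin n)) :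
    ∑ S ∈ A.powerset, zCoeff f S = f (chi A) := by
  have hz : ∀ S, zCoeff f S = ∑ T ∈ S.powerset, f (chi T) := fun S => rfl
  simp only [hz]
  rw [swap_sum A (fun T => f (chi T))]
  have : ∀ T ∈ A.powerset,
      ((A.powerset.filter (fun S => T ⊆ S)).card : ZMod 2) * f (chi T)
        = if T = A then f (chi T) else 0 := by
    intro T hT
    rw [Finset.mem_powerset] at hT
    rw [card_between_zmod A T hT]
    split_ifs <;> simp
  rw [Finset.sum_congr rfl this, Finset.sum_ite_eq' A.powerset A (fun T => f (chi T))]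
  simp

lemma prod_chi {n : ℕ} (A S : Finset (Fin n)) :
    (∏ i ∈ S, chi A i) = if S ⊆ A then 1 else 0 := by
  split_ifs with h
  · apply Finset.prod_eq_one
    intro i hi
    simp [chi, h hi]
  · obtain ⟨i, hiS, hiA⟩ := Finset.not_subset.mp h
    apply Finset.prod_eq_zero hiS
    simp [chi, hiA]

lemma expansion {n : ℕ} (f : Bf n) (a : Fin n → ZMod 2) :
    f a = ∑ S ∈ monomials f, ∏ i ∈ S, a i := by
  set A := Finset.univ.filter (fun i => a i = 1) with hA
  have ha : a = chi A := by
    funext i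
    have h2 : ∀ x : ZMod 2, x = 0 ∨ x = 1 := by decide
    rcases h2 (a i) with h | h <;> simp [chi, hA, h]
  rw [ha]
  rw [monomials, Finset.sum_filter]
  have : ∀ S : Finset (Fin n),
      (if zCoeff f S = 1 then ∏ i ∈ S, chi A i else 0)
        = if S ⊆ A then zCoeff f S else 0 := by
    intro S
    rw [prod_chi]
    have h2 : ∀ x : ZMod 2, x = 0 ∨ x = 1 := by decide
    rcases h2 (zCoeff f S) with h | h <;> simp [h]
  rw [Finset.sum_congr rfl (fun S _ => this S), ← Finset.sum_filter]
  have hpow : Finset.univ.filter (fun S : Finset (Fin n) => S ⊆ A) = A.powerset := by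
    ext S; simp
  rw [hpow, inv_sum]

/-- Part 1 of the theorem. -/
lemma innerNeg_eq {n : ℕ} (f : Bf n) (a : Fin n → ZMod 2) :
    innerNeg f a = ∑ S ∈ monomials f, ∑ T ∈ S.powerset, ∏ i ∈ T, a i := by
  rw [innerNeg, expansion f (fun i => a i + 1)]
  apply Finset.sum_congr rfl
  intro S _
  rw [Finset.prod_add]
  apply Finset.sum_congr rfl
  intro T _
  simp

/-- Uniqueness of the Zhegalkin coefficients. -/
lemma zCoeff_unique {n : ℕ} (g : Bf n) (c : Finset (Fin n) → ZMod 2)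
    (h : ∀ a, g a = ∑ T : Finset (Fin n), c T * ∏ i ∈ T, a i) (U : Finset (Fin n)) :
    zCoeff g U = c U := by
  have hz : zCoeff g U = ∑ T ∈ U.powerset, g (chi T) := rfl
  rw [hz]
  have step : ∀ T : Finset (Fin n), g (chi T) = ∑ W ∈ T.powerset, c W := by
    intro T
    rw [h (chi T)]
    have : ∀ W : Finset (Fin n), c W * ∏ i ∈ W, chi T i = if W ⊆ T then c W else 0 := by
      intro W
      rw [prod_chi]
      split_ifs <;> simp
    rw [Finset.sum_congr rfl (fun W _ => this W), ← Finset.sum_filter]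
    congr 1
    ext W; simp
  rw [Finset.sum_congr rfl (fun T _ => step T), swap_sum U c]
  have : ∀ W ∈ U.powerset,
      ((U.powerset.filter (fun S => W ⊆ S)).card : ZMod 2) * c W
        = if W = U then c W else 0 := by
    intro W hW
    rw [Finset.mem_powerset] at hW
    rw [card_between_zmod U W hW]
    split_ifs <;> simp
  rw [Finset.sum_congr rfl this, Finset.sum_ite_eq' U.powerset U c]
  simp

/-- The Zhegalkin coefficient of `f^n` counts supersets in `M(f)`. -/
lemma zCoeff_innerNeg {n : ℕ} (f : Bf n) (U : Finset (Fin n)) :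
    zCoeff (innerNeg f) U = (((monomials f).filter (fun S => U ⊆ S)).card : ZMod 2) := by
  apply zCoeff_unique
  intro a
  rw [innerNeg_eq]
  have h1 : ∀ S ∈ monomials f, ∑ T ∈ S.powerset, ∏ i ∈ T, a i
      = ∑ T : Finset (Fin n), (if T ⊆ S then 1 else 0) * ∏ i ∈ T, a i := by
    intro S _
    simp only [ite_mul, one_mul, zero_mul]
    rw [← Finset.sum_filter]
    congr 1
    ext T; simp
  rw [Finset.sum_congr rfl h1, Finset.sum_comm]
  apply Finset.sum_congr rfl
  intro T _
  rw [← Finset.sum_mul, Finset.sum_boole]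

lemma innerNeg_involutive {n : ℕ} (f : Bf n) : innerNeg (innerNeg f) = f := by
  funext a
  show f (fun i => (a i + 1) + 1) = f a
  congr 1
  funext i
  have : ∀ x : ZMod 2, x + 1 + 1 = x := by decide
  exact this (a i)

lemma mem_monomials_iff {n : ℕ} (f : Bf n) (S : Finset (Fin n)) :
    S ∈ monomials f ↔ zCoeff f S = 1 := by
  simp [monomials]

/-- One direction of the maximality transfer. -/
lemma max_step {n : ℕ} (f : Bf n) (S : Finset (Fin n))
    (hS : S ∈ monomials f ∧ ∀ T ∈ monomials f, S ⊆ T → T = S) :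
    S ∈ monomials (innerNeg f) ∧ ∀ T ∈ monomials (innerNeg f), S ⊆ T → T = S := by
  obtain ⟨hSm, hmax⟩ := hS
  constructor
  · rw [mem_monomials_iff, zCoeff_innerNeg]
    have : (monomials f).filter (fun T => S ⊆ T) = {S} := by
      ext T
      simp only [Finset.mem_filter, Finset.mem_singleton]
      constructor
      · rintro ⟨hT, hST⟩; exact hmax T hT hST
      · rintro rfl; exact ⟨hSm, subset_rfl⟩
    rw [this]
    simp
  · intro T hT hST
    by_contra hne
    have hssub : S ⊂ T := Finset.ssubset_iff_subset_ne.mpr ⟨hST, fun h => hne h.symm⟩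
    have hempty : (monomials f).filter (fun W => T ⊆ W) = ∅ := by
      ext W
      simp only [Finset.mem_filter, Finset.notMem_empty, iff_false, not_and]
      intro hW hTW
      have hSW : S ⊆ W := hST.trans hTW
      have : W = S := hmax W hW hSW
      subst this
      exact absurd (hTW.antisymm hST) hne
    rw [mem_monomials_iff, zCoeff_innerNeg, hempty] at hT
    simp at hT

theorem innerNeg_eq_and_maximal {n : ℕ} (f : Bf n) :
    (∀ a, innerNeg f a = ∑ S ∈ monomials f, ∑ T ∈ S.powerset, ∏ i ∈ T, a i) ∧
    (∀ S : Finset (Fin n),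
      (S ∈ monomials f ∧ ∀ T ∈ monomials f, S ⊆ T → T = S) ↔
      (S ∈ monomials (innerNeg f) ∧ ∀ T ∈ monomials (innerNeg f), S ⊆ T → T = S)) := by
  refine ⟨innerNeg_eq f, fun S => ⟨max_step f S, fun h => ?_⟩⟩
  have := max_step (innerNeg f) S h
  rwa [innerNeg_involutive] at this
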